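/- Let ħ > 0 and let Σ be a real symmetric positive definite 2n×2n matrix. Then the complex Hermitian matrix Σ + (iħ/2)J is positive semidefinite if and only if every complex eigenvalue of the matrix JΣ has modulus ≥ ħ/2 (equivalently, all symplectic eigenvalues λ₁^ω, …, λ_n^ω of Σ satisfy λ_j^ω ≥ ħ/2). -/

import Mathlib

open Matrix ComplexOrder MeasureTheory

noncomputable section

/-- Phase space ℝ^{2n} ≃ ℝⁿ × ℝⁿ, with coordinates z = (x,p). -/
abbrev PS (n : ℕ) := Fin n ⊕ Fin n → ℝ

/-- The standard symplectic matrix J = [[0, I], [-I, 0]]. -/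
def Jmat (n : ℕ) : Matrix (Fin n ⊕ Fin n) (Fin n ⊕ Fin n) ℝ :=
  Matrix.fromBlocks 0 1 (-1) 0

/-- The standard symplectic form ω(z,z′) = (Jz)·z′. -/
def symp (n : ℕ) (z z' : PS n) : ℝ := (Jmat n).mulVec z ⬝ᵥ z'

/-- The symplectic group Sp(n) = {S : SᵀJS = J}. -/
def Sp (n : ℕ) : Set (Matrix (Fin n ⊕ Fin n) (Fin n ⊕ Fin n) ℝ) :=
  {S | Sᵀ * Jmat n * S = Jmat n}

section Helpers

variable {m : Type*} [Fintype m] [DecidableEq m]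

lemma my_unitary_conj {a : Matrix m m ℂ} (u : unitary (Matrix m m ℂ)) :
    spectrum ℂ ((u : Matrix m m ℂ) * a * (star u : Matrix m m ℂ)) = spectrum ℂ a :=
  spectrum.units_conjugate (u := Unitary.toUnits u)

lemma herm_spectrum_eq {A : Matrix m m ℂ} (hA : A.IsHermitian) :
    spectrum ℂ A = Set.range (fun i => (hA.eigenvalues i : ℂ)) := by
  conv_lhs => rw [hA.spectral_theorem, Unitary.conjStarAlgAut_apply]
  rw [my_unitary_conj, spectrum_diagonal]
  rfl

lemma herm_psd_iff_spectrum {A : Matrix m m ℂ} (hA : A.IsHermitian) :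
    A.PosSemidef ↔ ∀ μ ∈ spectrum ℂ A, 0 ≤ μ := by
  rw [herm_spectrum_eq hA]
  constructor
  · intro h μ hμ
    obtain ⟨i, rfl⟩ := hμ
    simpa using Complex.zero_le_real.2 (h.eigenvalues_nonneg i)
  · intro h
    apply hA.posSemidef_iff_eigenvalues_nonneg.2
    intro i
    have := h _ ⟨i, rfl⟩
    exact Complex.zero_le_real.1 (by simpa using this)

lemma my_spectrum_transpose {A : Matrix m m ℂ} : spectrum ℂ Aᵀ = spectrum ℂ A := by
  have hu : ∀ M : Matrix m m ℂ, IsUnit Mᵀ ↔ IsUnit M := by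
    intro M
    rw [Matrix.isUnit_iff_isUnit_det, Matrix.det_transpose, ← Matrix.isUnit_iff_isUnit_det]
  ext μ
  rw [spectrum.mem_iff, spectrum.mem_iff, not_iff_not, ← hu]
  rw [Algebra.algebraMap_eq_smul_one, Matrix.transpose_sub, Matrix.transpose_smul,
    Matrix.transpose_one, Matrix.transpose_transpose]

lemma psd_conj_iff {A B : Matrix m m ℂ} (hB : IsUnit B.det) :
    (B * A * Bᴴ).PosSemidef ↔ A.PosSemidef := by
  constructor
  · intro h
    have h2 := h.mul_mul_conjTranspose_same B⁻¹
    have : B⁻¹ * (B * A * Bᴴ) * B⁻¹ᴴ = A := by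
      rw [Matrix.conjTranspose_nonsing_inv]
      calc B⁻¹ * (B * A * Bᴴ) * Bᴴ⁻¹ = (B⁻¹ * B) * A * (Bᴴ * Bᴴ⁻¹) := by
            simp only [Matrix.mul_assoc]
        _ = A := by
          rw [Matrix.nonsing_inv_mul _ hB, Matrix.mul_nonsing_inv _ (by
            rwa [Matrix.det_conjTranspose, isUnit_star]), one_mul, mul_one]
    rwa [this] at h2
  · intro h; exact h.mul_mul_conjTranspose_same B

lemma map_conjT (M : Matrix m m ℝ) : (M.map Complex.ofReal)ᴴ = Mᵀ.map Complex.ofReal := by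
  ext i j
  simp [Matrix.conjTranspose_apply, Matrix.map_apply, Complex.conj_ofReal]

lemma map_transpose' (M : Matrix m m ℝ) : (M.map Complex.ofReal)ᵀ = Mᵀ.map Complex.ofReal := by
  ext i j; simp [Matrix.map_apply]

lemma map_mul' (A B : Matrix m m ℝ) :
    (A * B).map Complex.ofReal = A.map Complex.ofReal * B.map Complex.ofReal := by
  ext i j
  simp [Matrix.map_apply, Matrix.mul_apply]

lemma real_aux {h r : ℝ} (hh : 0 < h) (hr : r ≠ 0) :
    (0 ≤ 1 + h * r⁻¹ ∧ 0 ≤ 1 + h * (-r)⁻¹) ↔ h ≤ |r| := by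
  have key : ∀ s : ℝ, 0 < s → ((0 ≤ 1 + h * s⁻¹ ∧ 0 ≤ 1 + h * (-s)⁻¹) ↔ h ≤ s) := by
    intro s hs
    have hs' : (0:ℝ) < s⁻¹ := inv_pos.2 hs
    rw [inv_neg]
    constructor
    · rintro ⟨_, h2⟩
      have h3 : h * s⁻¹ ≤ 1 := by linarith
      have h4 : h * s⁻¹ * s ≤ 1 * s := mul_le_mul_of_nonneg_right h3 hs.le
      rwa [mul_assoc, inv_mul_cancel₀ hs.ne', mul_one, one_mul] at h4
    · intro hle
      have h5 : h * s⁻¹ ≤ 1 := by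
        have := mul_le_mul_of_nonneg_right hle hs'.le
        rwa [mul_inv_cancel₀ hs.ne'] at this
      have h6 : 0 < h * s⁻¹ := mul_pos hh hs'
      constructor <;> [linarith; linarith]
  rcases hr.lt_or_gt with hneg | hpos
  · rw [abs_of_neg hneg]
    have := key (-r) (by linarith)
    rw [neg_neg] at this
    rw [← this]; tauto
  · rw [abs_of_pos hpos]; exact key r hpos

end Helpers

/-- The Robertson–Schrödinger condition Σ + (iℏ/2)J ⪰ 0 holds iff every complex
eigenvalue of JΣ has modulus ≥ ℏ/2 (i.e. all symplectic eigenvalues of Σ are ≥ ℏ/2). -/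
theorem RSUP_iff_symplectic_eigenvalues (n : ℕ) (ℏ : ℝ) (hℏ : 0 < ℏ)
    (Sig : Matrix (Fin n ⊕ Fin n) (Fin n ⊕ Fin n) ℝ) (hSig : Sig.PosDef) :
    (Sig.map (Complex.ofReal) +
        (((ℏ : ℂ) / 2) * Complex.I) • (Jmat n).map (Complex.ofReal)).PosSemidef ↔
      ∀ μ ∈ spectrum ℂ ((Jmat n * Sig).map (Complex.ofReal)), ℏ / 2 ≤ ‖μ‖ := by
  -- the real square root of Sig
  open scoped MatrixOrder in
  set R : Matrix (Fin n ⊕ Fin n) (Fin n ⊕ Fin n) ℝ := CFC.sqrt Sig with hRdef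
  have hRher : R.IsHermitian := by
    open scoped MatrixOrder in exact (CFC.sqrt_nonneg Sig).posSemidef.1
  have hRR : R * R = Sig := by
    open scoped MatrixOrder in exact CFC.sqrt_mul_sqrt_self Sig hSig.posSemidef.nonneg
  have hRdet : R.det ≠ 0 := by
    intro h0
    have hd : R.det * R.det = Sig.det := by rw [← Matrix.det_mul, hRR]
    rw [h0, mul_zero] at hd
    exact hSig.det_pos.ne' hd.symm
  -- complexifications
  set Rc : Matrix (Fin n ⊕ Fin n) (Fin n ⊕ Fin n) ℂ := R.map Complex.ofReal with hRcdef
  set Jc : Matrix (Fin n ⊕ Fin n) (Fin n ⊕ Fin n) ℂ := (Jmat n).map Complex.ofReal with hJcdef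
  set Sc : Matrix (Fin n ⊕ Fin n) (Fin n ⊕ Fin n) ℂ := Sig.map Complex.ofReal with hScdef
  have hScRc : Sc = Rc * Rc := by rw [hScdef, ← hRR, map_mul']
  have hRcdet : IsUnit Rc.det := by
    have hdet : Rc.det = (R.det : ℂ) := (RingHom.map_det Complex.ofRealHom R).symm
    rw [hdet]
    exact isUnit_iff_ne_zero.2 (by simpa using hRdet)
  have hRcH : Rcᴴ = Rc := by rw [hRcdef, map_conjT, show Rᵀ = R from hRher]
  have hJT : (Jmat n)ᵀ = -(Jmat n) := by
    rw [Jmat, Matrix.fromBlocks_transpose, Matrix.fromBlocks_neg]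
    simp
  have hJcT : Jcᵀ = -Jc := by
    rw [hJcdef, map_transpose', hJT]
    ext i j; simp [Matrix.map_apply]
  have hJcH : Jcᴴ = -Jc := by
    rw [hJcdef, map_conjT, hJT]
    ext i j; simp [Matrix.map_apply]
  have hJJ : Jmat n * Jmat n = -1 := by
    have hm1 : (-1 : Matrix (Fin n ⊕ Fin n) (Fin n ⊕ Fin n) ℝ)
        = Matrix.fromBlocks (-1) 0 0 (-1) := by
      rw [← Matrix.fromBlocks_one (l := Fin n) (m := Fin n) (α := ℝ), Matrix.fromBlocks_neg]
      simp
    rw [Jmat, Matrix.fromBlocks_multiply, hm1]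
    simp
  have hJcJc : Jc * Jc = -1 := by
    rw [hJcdef, ← map_mul', hJJ]
    ext i j
    simp [Matrix.map_apply, Matrix.one_apply, apply_ite Complex.ofReal]
  -- basic invertibility
  have hRcmul : Rc * Rc⁻¹ = 1 := Matrix.mul_nonsing_inv _ hRcdet
  have hRcmul' : Rc⁻¹ * Rc = 1 := Matrix.nonsing_inv_mul _ hRcdet
  have hRciH : (Rc⁻¹)ᴴ = Rc⁻¹ := by rw [Matrix.conjTranspose_nonsing_inv, hRcH]
  -- the key matrices
  set Kc : Matrix (Fin n ⊕ Fin n) (Fin n ⊕ Fin n) ℂ := Rc * Jc * Rc with hKcdef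
  set N : Matrix (Fin n ⊕ Fin n) (Fin n ⊕ Fin n) ℂ := Rc⁻¹ * Jc * Rc⁻¹ with hNdef
  set G : Matrix (Fin n ⊕ Fin n) (Fin n ⊕ Fin n) ℂ := Complex.I • Kc with hGdef
  set H : Matrix (Fin n ⊕ Fin n) (Fin n ⊕ Fin n) ℂ := Complex.I • N with hHdef
  have hKN : Kc * N = -1 := by
    rw [hKcdef, hNdef]
    calc Rc * Jc * Rc * (Rc⁻¹ * Jc * Rc⁻¹)
        = Rc * Jc * (Rc * Rc⁻¹) * Jc * Rc⁻¹ := by simp only [Matrix.mul_assoc]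
      _ = Rc * (Jc * Jc) * Rc⁻¹ := by rw [hRcmul]; simp only [Matrix.mul_assoc, Matrix.mul_one,
            Matrix.one_mul]
      _ = -(Rc * Rc⁻¹) := by rw [hJcJc]; simp only [Matrix.mul_neg, Matrix.neg_mul,
            Matrix.mul_one, Matrix.one_mul]
      _ = -1 := by rw [hRcmul]
  have hGH : G * H = 1 := by
    rw [hGdef, hHdef, Matrix.smul_mul, Matrix.mul_smul, smul_smul, Complex.I_mul_I, hKN]
    simp
  have hHG : H * G = 1 := mul_eq_one_comm.mp hGH
  -- the unit with value G and inverse H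
  set uG : (Matrix (Fin n ⊕ Fin n) (Fin n ⊕ Fin n) ℂ)ˣ := ⟨G, H, hGH, hHG⟩ with huG
  -- Hermitian properties
  have hNH : Nᴴ = -N := by
    rw [hNdef]
    rw [Matrix.conjTranspose_mul, Matrix.conjTranspose_mul, hRciH, hJcH]
    simp only [Matrix.mul_neg, Matrix.neg_mul, Matrix.mul_assoc]
  have hKcH : Kcᴴ = -Kc := by
    rw [hKcdef]
    rw [Matrix.conjTranspose_mul, Matrix.conjTranspose_mul, hRcH, hJcH]
    simp only [Matrix.mul_neg, Matrix.neg_mul, Matrix.mul_assoc]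
  have hHher : H.IsHermitian := by
    show Hᴴ = H
    rw [hHdef, Matrix.conjTranspose_smul, hNH]
    simp [Complex.star_def, Complex.conj_I]
  have hGher : G.IsHermitian := by
    show Gᴴ = G
    rw [hGdef, Matrix.conjTranspose_smul, hKcH]
    simp [Complex.star_def, Complex.conj_I]
  -- transpose of G
  have hKcT : Kcᵀ = -Kc := by
    rw [hKcdef, Matrix.transpose_mul, Matrix.transpose_mul, hJcT,
      show Rcᵀ = Rc from by rw [hRcdef, map_transpose', show Rᵀ = R from hRher]]
    simp only [Matrix.mul_neg, Matrix.neg_mul, Matrix.mul_assoc]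
  have hGT : Gᵀ = -G := by
    rw [hGdef, Matrix.transpose_smul, hKcT, smul_neg]
  -- spectrum of G is closed under negation
  have hneg : ∀ t ∈ spectrum ℂ G, -t ∈ spectrum ℂ G := by
    intro t ht
    have h1 : spectrum ℂ (-G) = spectrum ℂ G := by rw [← hGT, my_spectrum_transpose]
    have h2 : ((-1 : ℂˣ) • t) ∈ spectrum ℂ ((-1 : ℂˣ) • G) :=
      spectrum.smul_mem_smul_iff.2 ht
    have h3 : ((-1 : ℂˣ) : ℂ) • G = -G := by simp
    have h4 : ((-1 : ℂˣ) • t) = -t := by simp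
    rw [Units.smul_def, h3, h4, h1] at h2
    exact h2
  -- elements of the spectrum of G are nonzero
  have hne : ∀ t ∈ spectrum ℂ G, t ≠ 0 := by
    intro t ht
    exact spectrum.ne_zero_of_mem_of_unit (a := uG) ht
  -- elements of the spectrum of G are real
  have hreal : ∀ t ∈ spectrum ℂ G, ∃ r : ℝ, t = (r : ℂ) := by
    intro t ht
    rw [herm_spectrum_eq hGher] at ht
    obtain ⟨i, hi⟩ := ht
    exact ⟨_, hi.symm⟩
  -- spectrum of H in terms of spectrum of G
  have hHspec : ∀ s, s ∈ spectrum ℂ H ↔ ∃ t ∈ spectrum ℂ G, s = t⁻¹ := by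
    intro s
    constructor
    · intro hs
      have hs0 : s ≠ 0 := spectrum.ne_zero_of_mem_of_unit (a := uG⁻¹) hs
      have := (spectrum.inv_mem_iff (r := Units.mk0 s hs0) (a := uG⁻¹)).1 hs
      rw [inv_inv (a := uG)] at this
      refine ⟨s⁻¹, this, by rw [inv_inv]⟩
    · rintro ⟨t, ht, rfl⟩
      have ht0 : t ≠ 0 := hne t ht
      exact (spectrum.inv_mem_iff (r := Units.mk0 t ht0) (a := uG)).1 ht
  -- spectrum of (J Sig) in terms of spectrum of G
  have hKcspec : spectrum ℂ ((Jmat n * Sig).map Complex.ofReal) = spectrum ℂ Kc := by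
    rw [map_mul', ← hJcdef, ← hScdef, hScRc]
    set uR : (Matrix (Fin n ⊕ Fin n) (Fin n ⊕ Fin n) ℂ)ˣ :=
      ⟨Rc, Rc⁻¹, hRcmul, hRcmul'⟩ with huR
    have : Kc = (uR : Matrix _ _ ℂ) * (Jc * (Rc * Rc)) * ((uR⁻¹ : _ˣ) : Matrix _ _ ℂ) := by
      show Kc = Rc * (Jc * (Rc * Rc)) * Rc⁻¹
      rw [hKcdef]
      calc Rc * Jc * Rc = Rc * Jc * Rc * (Rc * Rc⁻¹) := by rw [hRcmul, Matrix.mul_one]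
        _ = Rc * (Jc * (Rc * Rc)) * Rc⁻¹ := by simp only [Matrix.mul_assoc]
    rw [this, spectrum.units_conjugate]
  have hKG : ∀ μ, μ ∈ spectrum ℂ Kc ↔ Complex.I * μ ∈ spectrum ℂ G := by
    intro μ
    have := spectrum.smul_mem_smul_iff (r := Units.mk0 Complex.I Complex.I_ne_zero)
      (a := Kc) (s := μ)
    rw [show (Units.mk0 Complex.I Complex.I_ne_zero) • μ = Complex.I * μ from rfl,
      show (Units.mk0 Complex.I Complex.I_ne_zero) • Kc = G from rfl] at this
    exact this.symm
  -- RHS in terms of G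
  have hRHS : (∀ μ ∈ spectrum ℂ ((Jmat n * Sig).map Complex.ofReal), ℏ / 2 ≤ ‖μ‖) ↔
      ∀ t ∈ spectrum ℂ G, ℏ / 2 ≤ ‖t‖ := by
    rw [hKcspec]
    constructor
    · intro h t ht
      have hμ : -(Complex.I) * t ∈ spectrum ℂ Kc := by
        rw [hKG]
        have : Complex.I * (-(Complex.I) * t) = t := by
          rw [← mul_assoc, mul_neg, Complex.I_mul_I, neg_neg, one_mul]
        rw [this]; exact ht
      have := h _ hμ
      simpa using this
    · intro h μ hμ
      have := h _ ((hKG μ).1 hμ)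
      simpa using this
  -- LHS: congruence to 1 + (ℏ/2) • H
  set M : Matrix (Fin n ⊕ Fin n) (Fin n ⊕ Fin n) ℂ := 1 + ((ℏ : ℂ) / 2) • H with hMdef
  have hcong : (Sc + (((ℏ : ℂ) / 2) * Complex.I) • Jc).PosSemidef ↔ M.PosSemidef := by
    have hBdet : IsUnit (Rc⁻¹).det := Matrix.isUnit_nonsing_inv_det_iff.2 hRcdet
    rw [← psd_conj_iff (A := Sc + (((ℏ : ℂ) / 2) * Complex.I) • Jc) hBdet, hRciH]
    have hE : Rc⁻¹ * (Sc + (((ℏ : ℂ) / 2) * Complex.I) • Jc) * Rc⁻¹ = M := by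
      rw [Matrix.mul_add, Matrix.add_mul, hScRc]
      have e1 : Rc⁻¹ * (Rc * Rc) * Rc⁻¹ = 1 := by
        calc Rc⁻¹ * (Rc * Rc) * Rc⁻¹ = (Rc⁻¹ * Rc) * (Rc * Rc⁻¹) := by
              simp only [Matrix.mul_assoc]
          _ = 1 := by rw [hRcmul, hRcmul', Matrix.one_mul]
      have e2 : Rc⁻¹ * ((((ℏ : ℂ) / 2) * Complex.I) • Jc) * Rc⁻¹
          = ((ℏ : ℂ) / 2) • H := by
        rw [Matrix.mul_smul, Matrix.smul_mul, hHdef, hNdef,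
          mul_smul ((ℏ : ℂ) / 2) Complex.I (Rc⁻¹ * Jc * Rc⁻¹)]
      rw [e1, e2, hMdef]
    rw [hE]
  have hMher : M.IsHermitian := by
    show Mᴴ = M
    rw [hMdef, Matrix.conjTranspose_add, Matrix.conjTranspose_one, Matrix.conjTranspose_smul,
      hHher.eq]
    congr 1
    simp [Complex.star_def, map_div₀, Complex.conj_ofReal]
  -- spectrum of M
  have hMspec : ∀ μ, μ ∈ spectrum ℂ M ↔
      ∃ s ∈ spectrum ℂ H, μ = 1 + ((ℏ : ℂ) / 2) * s := by
    intro μ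
    have hu2 : ((ℏ : ℂ) / 2) ≠ 0 := by
      simp [Complex.ofReal_ne_zero, hℏ.ne']
    have hMeq : M = algebraMap ℂ (Matrix (Fin n ⊕ Fin n) (Fin n ⊕ Fin n) ℂ) 1
        + ((ℏ : ℂ) / 2) • H := by
      rw [hMdef]
      simp
    rw [hMeq, ← spectrum.singleton_add_eq,
      show ((ℏ : ℂ) / 2) • H = (Units.mk0 _ hu2) • H from rfl,
      spectrum.unit_smul_eq_smul H (Units.mk0 _ hu2)]
    constructor
    · intro h
      rw [Set.singleton_add] at h
      obtain ⟨x, hx, hx2⟩ := h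
      obtain ⟨s, hs, rfl⟩ := hx
      exact ⟨s, hs, by rw [← hx2]; rfl⟩
    · rintro ⟨s, hs, rfl⟩
      rw [Set.singleton_add]
      exact ⟨((ℏ : ℂ) / 2) * s, ⟨s, hs, rfl⟩, rfl⟩
  -- put everything together
  rw [hcong, herm_psd_iff_spectrum hMher, hRHS]
  constructor
  · intro h t ht
    obtain ⟨r, rfl⟩ := hreal t ht
    have hr0 : r ≠ 0 := by
      intro h0
      exact hne _ ht (by rw [h0]; simp)
    have h1 : (0:ℂ) ≤ 1 + ((ℏ : ℂ) / 2) * ((r : ℂ))⁻¹ := by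
      apply h
      rw [hMspec]
      exact ⟨((r:ℂ))⁻¹, (hHspec _).2 ⟨_, ht, rfl⟩, rfl⟩
    have h2 : (0:ℂ) ≤ 1 + ((ℏ : ℂ) / 2) * (-(r : ℂ))⁻¹ := by
      apply h
      rw [hMspec]
      refine ⟨(-(r:ℂ))⁻¹, (hHspec _).2 ⟨-(r:ℂ), ?_, rfl⟩, rfl⟩
      exact hneg _ ht
    have h1' : 0 ≤ 1 + (ℏ / 2) * r⁻¹ := by
      rw [← Complex.zero_le_real]
      push_cast
      exact h1
    have h2' : 0 ≤ 1 + (ℏ / 2) * (-r)⁻¹ := by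
      rw [← Complex.zero_le_real]
      push_cast
      exact h2
    have := (real_aux (by positivity : (0:ℝ) < ℏ / 2) hr0).1 ⟨h1', h2'⟩
    simpa using this
  · intro h μ hμ
    rw [hMspec] at hμ
    obtain ⟨s, hs, rfl⟩ := hμ
    obtain ⟨t, ht, rfl⟩ := (hHspec s).1 hs
    obtain ⟨r, rfl⟩ := hreal t ht
    have hr0 : r ≠ 0 := by
      intro h0
      exact hne _ ht (by rw [h0]; simp)
    have habs := h _ ht
    rw [Complex.norm_real, Real.norm_eq_abs] at habs
    have := (real_aux (by positivity : (0:ℝ) < ℏ / 2) hr0).2 habs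
    obtain ⟨h1', _⟩ := this
    rw [show ((r:ℂ))⁻¹ = ((r⁻¹ : ℝ) : ℂ) by push_cast; ring]
    rw [show (1 : ℂ) + ((ℏ : ℂ) / 2) * ((r⁻¹ : ℝ) : ℂ) = (((1 + ℏ / 2 * r⁻¹ : ℝ)) : ℂ) by
      push_cast; ring]
    exact Complex.zero_le_real.2 h1'
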